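/- arXiv:2204.13936 — 2 statements merged into one kernel-verified Lean document; each statement's English description precedes it below -/
import Mathlib

section
/- Let r ≥ 3, t ≥ 1 and n > 2(r−1)². Then χ^e(K_n^r(t)) = χ^ve(K_n^r(t)) = χ^ven(K_n^r(t)) = 2, where K_n^r(t) is the complete r-uniform n-partite hypergraph with all parts of size t. -/
open Finset

open Classical in
/-- `σ^e(v) = Σ_{e ∋ v} w(e)` for a hypergraph with edge set `E`. -/
noncomputable def sigmaE {V : Type*} [Fintype V] (E : Finset (Finset V))
    (w : Finset V → ℕ) (v : V) : ℕ :=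
  ∑ e ∈ E.filter (fun e => v ∈ e), w e

/-- The hypergraph with edge set `E` admits an edge weighting with weights in
`{1,…,k}` such that `σ^e` is a proper vertex coloring: every edge with at least
two vertices contains two vertices with distinct colors. -/
def HasNSDEdgeWeighting {V : Type*} [Fintype V] (E : Finset (Finset V)) (k : ℕ) : Prop :=
  ∃ w : Finset V → ℕ, (∀ e ∈ E, 1 ≤ w e ∧ w e ≤ k) ∧
    ∀ e ∈ E, 2 ≤ e.card → ∃ u ∈ e, ∃ v ∈ e, sigmaE E w u ≠ sigmaE E w v

open Classical in
/-- `σ^ve(v) = w(v) + Σ_{e ∋ v} w(e)` for a total weighting of a hypergraph. -/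
noncomputable def sigmaVE {V : Type*} [Fintype V] (E : Finset (Finset V))
    (wV : V → ℕ) (wE : Finset V → ℕ) (v : V) : ℕ :=
  wV v + ∑ e ∈ E.filter (fun e => v ∈ e), wE e

open Classical in
/-- `σ^ven(v) = w(v) + Σ_{e ∋ v} w(e) + Σ_{u ∈ N(v)} w(u)`, where
`N(v) = {u ≠ v : some edge contains both u and v}`. -/
noncomputable def sigmaVEN {V : Type*} [Fintype V] (E : Finset (Finset V))
    (wV : V → ℕ) (wE : Finset V → ℕ) (v : V) : ℕ :=
  sigmaVE E wV wE v +
    ∑ u ∈ Finset.univ.filter (fun u => u ≠ v ∧ ∃ e ∈ E, v ∈ e ∧ u ∈ e), wV u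

/-- The hypergraph with edge set `E` admits a total weighting with weights in
`{1,…,k}` such that `σ^ve` is a proper vertex coloring. -/
def HasNSDTotalWeightingVE {V : Type*} [Fintype V] (E : Finset (Finset V)) (k : ℕ) : Prop :=
  ∃ wV : V → ℕ, ∃ wE : Finset V → ℕ,
    (∀ v : V, 1 ≤ wV v ∧ wV v ≤ k) ∧ (∀ e ∈ E, 1 ≤ wE e ∧ wE e ≤ k) ∧
    ∀ e ∈ E, 2 ≤ e.card →
      ∃ u ∈ e, ∃ v ∈ e, sigmaVE E wV wE u ≠ sigmaVE E wV wE v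

/-- The hypergraph with edge set `E` admits a total weighting with weights in
`{1,…,k}` such that `σ^ven` is a proper vertex coloring. -/
def HasNFSDTotalWeighting {V : Type*} [Fintype V] (E : Finset (Finset V)) (k : ℕ) : Prop :=
  ∃ wV : V → ℕ, ∃ wE : Finset V → ℕ,
    (∀ v : V, 1 ≤ wV v ∧ wV v ≤ k) ∧ (∀ e ∈ E, 1 ≤ wE e ∧ wE e ≤ k) ∧
    ∀ e ∈ E, 2 ≤ e.card →
      ∃ u ∈ e, ∃ v ∈ e, sigmaVEN E wV wE u ≠ sigmaVEN E wV wE v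

/-- The edge set of the complete `r`-uniform `n`-partite hypergraph with parts
`{i} × Fin t` (`i : Fin n`), each of size `t`. -/
def completePartiteEdges (n r t : ℕ) : Finset (Finset (Fin n × Fin t)) :=
  (Finset.univ.powersetCard r).filter
    (fun e => ∀ u ∈ e, ∀ v ∈ e, u ≠ v → (u : Fin n × Fin t).1 ≠ v.1)

namespace ChiCPH

variable {n r t : ℕ}

/-- An automorphism of the complete partite hypergraph sending `a` to `b`. -/
def swapMap (a b : Fin n × Fin t) : Fin n × Fin t ≃ Fin n × Fin t :=
  (Equiv.swap a.1 b.1).prodCongr (Equiv.swap a.2 b.2)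

lemma swapMap_a (a b : Fin n × Fin t) : swapMap a b a = b := by
  simp [swapMap, Prod.map, Prod.ext_iff]

lemma swapMap_b (a b : Fin n × Fin t) : swapMap a b b = a := by
  simp [swapMap, Prod.map, Prod.ext_iff]

lemma swapMap_invol (a b u : Fin n × Fin t) : swapMap a b (swapMap a b u) = u := by
  simp [swapMap, Prod.map, Prod.ext_iff]

lemma swapMap_fst_ne (a b : Fin n × Fin t) {u v : Fin n × Fin t} (h : u.1 ≠ v.1) :
    (swapMap a b u).1 ≠ (swapMap a b v).1 := by
  simpa [swapMap] using fun hc => h ((Equiv.swap a.1 b.1).injective hc)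

lemma mem_cpe {e : Finset (Fin n × Fin t)} :
    e ∈ completePartiteEdges n r t ↔
      e.card = r ∧ ∀ u ∈ e, ∀ v ∈ e, u ≠ v → u.1 ≠ v.1 := by
  constructor
  · intro h
    rw [completePartiteEdges, Finset.mem_filter, Finset.mem_powersetCard] at h
    exact ⟨h.1.2, h.2⟩
  · intro h
    rw [completePartiteEdges, Finset.mem_filter, Finset.mem_powersetCard]
    exact ⟨⟨Finset.subset_univ _, h.1⟩, h.2⟩

lemma image_swap_mem (a b : Fin n × Fin t) {e : Finset (Fin n × Fin t)}
    (he : e ∈ completePartiteEdges n r t) :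
    e.image (swapMap a b) ∈ completePartiteEdges n r t := by
  rw [mem_cpe] at he ⊢
  refine ⟨?_, ?_⟩
  · rw [Finset.card_image_of_injective _ (swapMap a b).injective]; exact he.1
  · intro u hu v hv huv
    simp only [Finset.mem_image] at hu hv
    obtain ⟨u', hu', rfl⟩ := hu
    obtain ⟨v', hv', rfl⟩ := hv
    have : u' ≠ v' := fun h => huv (by rw [h])
    exact swapMap_fst_ne a b (he.2 u' hu' v' hv' this)

lemma image_swap_invol (a b : Fin n × Fin t) (e : Finset (Fin n × Fin t)) :
    (e.image (swapMap a b)).image (swapMap a b) = e := by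
  rw [Finset.image_image]
  have : (⇑(swapMap a b) ∘ ⇑(swapMap a b)) = id := by
    funext u; exact swapMap_invol a b u
  rw [this, Finset.image_id]

/-- Degrees are constant. -/
lemma deg_const (a b : Fin n × Fin t) :
    ((completePartiteEdges n r t).filter (fun e => a ∈ e)).card =
      ((completePartiteEdges n r t).filter (fun e => b ∈ e)).card := by
  classical
  refine Finset.card_bij' (fun e _ => e.image (swapMap a b))
    (fun e _ => e.image (swapMap a b)) ?_ ?_ ?_ ?_
  · intro e he
    rw [Finset.mem_filter] at he ⊢
    exact ⟨image_swap_mem a b he.1, by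
      have := Finset.mem_image_of_mem (swapMap a b) he.2
      rwa [swapMap_a] at this⟩
  · intro e he
    rw [Finset.mem_filter] at he ⊢
    exact ⟨image_swap_mem a b he.1, by
      have := Finset.mem_image_of_mem (swapMap a b) he.2
      rwa [swapMap_b] at this⟩
  · intro e _; exact image_swap_invol a b e
  · intro e _; exact image_swap_invol a b e

/-- Neighbourhood sizes are constant. -/
lemma nbhd_const (a b : Fin n × Fin t) :
    (Finset.univ.filter (fun u => u ≠ a ∧ ∃ e ∈ completePartiteEdges n r t, a ∈ e ∧ u ∈ e)).card =
      (Finset.univ.filter (fun u => u ≠ b ∧ ∃ e ∈ completePartiteEdges n r t, b ∈ e ∧ u ∈ e)).card := by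
  classical
  refine Finset.card_bij' (fun u _ => swapMap a b u) (fun u _ => swapMap a b u) ?_ ?_ ?_ ?_
  · intro u hu
    rw [Finset.mem_filter] at hu ⊢
    obtain ⟨-, hne, e, he, hae, hue⟩ := hu
    refine ⟨Finset.mem_univ _, fun hc => hne ?_, e.image (swapMap a b), image_swap_mem a b he, ?_, ?_⟩
    · have := congrArg (swapMap a b) hc
      rwa [swapMap_invol, swapMap_b] at this
    · have := Finset.mem_image_of_mem (swapMap a b) hae; rwa [swapMap_a] at this
    · exact Finset.mem_image_of_mem _ hue
  · intro u hu
    rw [Finset.mem_filter] at hu ⊢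
    obtain ⟨-, hne, e, he, hbe, hue⟩ := hu
    refine ⟨Finset.mem_univ _, fun hc => hne ?_, e.image (swapMap a b), image_swap_mem a b he, ?_, ?_⟩
    · have := congrArg (swapMap a b) hc
      rwa [swapMap_invol, swapMap_a] at this
    · have := Finset.mem_image_of_mem (swapMap a b) hbe; rwa [swapMap_b] at this
    · exact Finset.mem_image_of_mem _ hue
  · intro u _; exact swapMap_invol a b u
  · intro u _; exact swapMap_invol a b u



/-! ### Numeric part -/

def sP (n r : ℕ) : ℕ := (n - (r - 2)) / (r - 1)

def LP (n r : ℕ) : ℕ := n - sP n r - (r - 2)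

def PairsP (n r : ℕ) : Finset ((_ : ℕ) × ℕ) :=
  (Finset.range (sP n r)).sigma fun j => Finset.range ((sP n r - j) * (r - 2))

def TP (n r : ℕ) : ℕ := (PairsP n r).card

def dP (n r : ℕ) (q : ℕ) : ℕ :=
  if q < LP n r then sP n r - q / (r - 2)
  else if q < LP n r + sP n r then (sP n r - (q - LP n r)) * (r - 2)
  else TP n r

lemma mem_PairsP {jp : (_ : ℕ) × ℕ} :
    jp ∈ PairsP n r ↔ jp.1 < sP n r ∧ jp.2 < (sP n r - jp.1) * (r - 2) := by
  cases jp with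
  | mk j p => simp [PairsP]

section Numeric

lemma rsq {r : ℕ} (hr : 3 ≤ r) : 2 * (r - 1) ≤ (r - 1) ^ 2 := by
  rw [pow_two]
  exact Nat.mul_le_mul_right _ (by omega)

variable (hr : 3 ≤ r) (hn : 2 * (r - 1) ^ 2 < n)
include hr hn

lemma r_le_n : r ≤ n := by
  have := rsq hr
  omega

lemma sP_ge_two : 2 ≤ sP n r := by
  have h := rsq hr
  exact (Nat.le_div_iff_mul_le (by omega)).2 (by omega)

lemma size_eq : LP n r + sP n r + (r - 2) = n := by
  have h1 : sP n r ≤ n - (r - 2) := Nat.div_le_self _ _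
  have h2 : r ≤ n := r_le_n hr hn
  unfold LP
  omega

lemma sm_le_LP : sP n r * (r - 2) ≤ LP n r := by
  have h1 : sP n r * (r - 1) ≤ n - (r - 2) := Nat.div_mul_le_self _ _
  have h2 : r ≤ n := r_le_n hr hn
  have h3 : sP n r * (r - 1) = sP n r * (r - 2) + sP n r := by
    have h4 : r - 1 = (r - 2) + 1 := by omega
    rw [h4, Nat.mul_add, Nat.mul_one]
  unfold LP
  omega

lemma LP_le : LP n r ≤ sP n r * (r - 2) + (r - 2) := by
  have h0 : 0 < r - 1 := by omega
  have h1 : (r - 1) * sP n r + (n - (r - 2)) % (r - 1) = n - (r - 2) :=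
    Nat.div_add_mod (n - (r - 2)) (r - 1)
  have h2 := Nat.mod_lt (n - (r - 2)) h0
  have h3 : (r - 1) * sP n r = sP n r * (r - 2) + sP n r := by
    rw [Nat.mul_comm]
    have h4 : r - 1 = (r - 2) + 1 := by omega
    rw [h4, Nat.mul_add, Nat.mul_one]
  have h5 : r ≤ n := r_le_n hr hn
  have h6 : LP n r = n - sP n r - (r - 2) := rfl
  omega

lemma TP_eq : TP n r = ∑ j ∈ Finset.range (sP n r), (sP n r - j) * (r - 2) := by
  unfold TP PairsP
  rw [Finset.card_sigma]
  simp

lemma TP_ge : sP n r * (r - 2) + (r - 2) ≤ TP n r := by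
  have h2 : 2 ≤ sP n r := sP_ge_two hr hn
  rw [TP_eq hr hn]
  have hsub : Finset.range 2 ⊆ Finset.range (sP n r) := by
    intro x hx; simp only [Finset.mem_range] at hx ⊢; omega
  have h3 : ∑ j ∈ Finset.range 2, (sP n r - j) * (r - 2) ≤
      ∑ j ∈ Finset.range (sP n r), (sP n r - j) * (r - 2) :=
    Finset.sum_le_sum_of_subset hsub
  have h4 : ∑ j ∈ Finset.range 2, (sP n r - j) * (r - 2)
      = sP n r * (r - 2) + (sP n r - 1) * (r - 2) := by
    simp [Finset.sum_range_succ]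
  have h5 : r - 2 ≤ (sP n r - 1) * (r - 2) := Nat.le_mul_of_pos_left _ (by omega)
  omega

/-- The number of pairs "containing" a part `q`. -/
lemma pairs_card {q : ℕ} (hq : q < n) :
    ((PairsP n r).filter (fun jp =>
        q = jp.2 ∨ q = LP n r + jp.1 ∨ LP n r + sP n r ≤ q)).card = dP n r q := by
  have hm : 0 < r - 2 := by omega
  have hsm := sm_le_LP hr hn
  by_cases hlow : q < LP n r
  · -- low case
    have hcond : ∀ jp ∈ PairsP n r,
        ((q = jp.2 ∨ q = LP n r + jp.1 ∨ LP n r + sP n r ≤ q) ↔ q = jp.2) := by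
      intro jp _; constructor
      · rintro (h | h | h)
        · exact h
        · omega
        · omega
      · exact Or.inl
    rw [Finset.filter_congr hcond, dP, if_pos hlow]
    rw [← Finset.card_range (sP n r - q / (r - 2))]
    refine Finset.card_bij' (fun jp _ => jp.1)
      (fun j _ => (⟨j, q⟩ : (_ : ℕ) × ℕ)) ?_ ?_ ?_ ?_
    · intro jp hjp
      rw [Finset.mem_filter, mem_PairsP] at hjp
      obtain ⟨⟨h1, h2⟩, h3⟩ := hjp
      have h4 : q < (sP n r - jp.1) * (r - 2) := h3 ▸ h2
      have h5 : q / (r - 2) < sP n r - jp.1 := (Nat.div_lt_iff_lt_mul hm).2 h4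
      simp only [Finset.mem_range]
      omega
    · intro j hj
      simp only [Finset.mem_range] at hj
      have h5 : q / (r - 2) < sP n r - j := by omega
      have h4 : q < (sP n r - j) * (r - 2) := (Nat.div_lt_iff_lt_mul hm).1 h5
      have hmem : (⟨j, q⟩ : (_ : ℕ) × ℕ) ∈
          (PairsP n r).filter (fun jp => q = jp.2) := by
        rw [Finset.mem_filter, mem_PairsP]
        exact ⟨⟨Nat.lt_of_lt_of_le hj (Nat.sub_le _ _), h4⟩, rfl⟩
      exact hmem
    · intro jp hjp
      rw [Finset.mem_filter] at hjp
      have h6 := hjp.2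
      cases jp with
      | mk j p => exact congrArg (Sigma.mk j) h6
    · intro j _; rfl
  · by_cases hmid : q < LP n r + sP n r
    · -- middle case
      have hcond : ∀ jp ∈ PairsP n r,
          ((q = jp.2 ∨ q = LP n r + jp.1 ∨ LP n r + sP n r ≤ q) ↔ jp.1 = q - LP n r) := by
        intro jp hjp
        rw [mem_PairsP] at hjp
        have hp2 : jp.2 < sP n r * (r - 2) := by
          calc jp.2 < (sP n r - jp.1) * (r - 2) := hjp.2
            _ ≤ sP n r * (r - 2) := Nat.mul_le_mul_right _ (by omega)
        constructor
        · rintro (h | h | h) <;> omega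
        · intro h; right; left; omega
      rw [Finset.filter_congr hcond, dP, if_neg hlow, if_pos hmid]
      rw [← Finset.card_range ((sP n r - (q - LP n r)) * (r - 2))]
      refine Finset.card_bij' (fun jp _ => jp.2)
        (fun p _ => (⟨q - LP n r, p⟩ : (_ : ℕ) × ℕ)) ?_ ?_ ?_ ?_
      · intro jp hjp
        rw [Finset.mem_filter, mem_PairsP] at hjp
        obtain ⟨⟨h1, h2⟩, h3⟩ := hjp
        rw [Finset.mem_range]
        rw [h3] at h2
        exact h2
      · intro p hp
        rw [Finset.mem_range] at hp
        have hmem : (⟨q - LP n r, p⟩ : (_ : ℕ) × ℕ) ∈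
            (PairsP n r).filter (fun jp => jp.1 = q - LP n r) := by
          rw [Finset.mem_filter, mem_PairsP]
          exact ⟨⟨show q - LP n r < sP n r by omega, hp⟩, rfl⟩
        exact hmem
      · intro jp hjp
        rw [Finset.mem_filter] at hjp
        have h6 := hjp.2
        cases jp with
        | mk j p => exact congrArg (fun z => (⟨z, p⟩ : (_ : ℕ) × ℕ)) h6.symm
      · intro p _; rfl
    · -- top case
      have hcond : ∀ jp ∈ PairsP n r,
          ((q = jp.2 ∨ q = LP n r + jp.1 ∨ LP n r + sP n r ≤ q) ↔ True) := by
        intro jp _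
        simp only [iff_true]
        right; right; omega
      rw [Finset.filter_congr hcond, Finset.filter_true, dP, if_neg hlow, if_neg hmid]
      rfl

/-- Each level set of `dP` inside `range n` has at most `r - 1` elements. -/
lemma class_card (v : ℕ) :
    ((Finset.range n).filter (fun q => dP n r q = v)).card ≤ r - 1 := by
  have hm : 0 < r - 2 := by omega
  have hsm := sm_le_LP hr hn
  have hLub := LP_le hr hn
  have hTge := TP_ge hr hn
  have hs2 := sP_ge_two hr hn
  have hsize := size_eq hr hn
  by_cases hv0 : v = 0
  · subst hv0
    have hsub : (Finset.range n).filter (fun q => dP n r q = 0) ⊆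
        Finset.Ico (sP n r * (r - 2)) (LP n r) := by
      intro q hq
      rw [Finset.mem_filter, Finset.mem_range] at hq
      obtain ⟨hqn, hd⟩ := hq
      rw [Finset.mem_Ico]
      rw [dP] at hd
      by_cases hlow : q < LP n r
      · rw [if_pos hlow] at hd
        obtain ⟨a, ha⟩ : ∃ a, q / (r - 2) = a := ⟨_, rfl⟩
        rw [ha] at hd
        have h7 : sP n r ≤ q / (r - 2) := by rw [ha]; omega
        have h8 := (Nat.le_div_iff_mul_le hm).1 h7
        omega
      · rw [if_neg hlow] at hd
        by_cases hmid : q < LP n r + sP n r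
        · rw [if_pos hmid] at hd
          have h1 : 1 ≤ sP n r - (q - LP n r) := by omega
          have h9 := Nat.mul_le_mul h1 (le_refl (r - 2))
          omega
        · rw [if_neg hmid] at hd
          omega
    calc ((Finset.range n).filter (fun q => dP n r q = 0)).card
        ≤ (Finset.Ico (sP n r * (r - 2)) (LP n r)).card := Finset.card_le_card hsub
      _ = LP n r - sP n r * (r - 2) := Nat.card_Ico _ _
      _ ≤ r - 1 := by omega
  · by_cases hvT : v = TP n r
    · subst hvT
      have hsub : (Finset.range n).filter (fun q => dP n r q = TP n r) ⊆
          Finset.Ico (LP n r + sP n r) n := by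
        intro q hq
        rw [Finset.mem_filter, Finset.mem_range] at hq
        obtain ⟨hqn, hd⟩ := hq
        rw [Finset.mem_Ico]
        rw [dP] at hd
        by_cases hlow : q < LP n r
        · rw [if_pos hlow] at hd
          have h1 : sP n r - q / (r - 2) ≤ sP n r := Nat.sub_le _ _
          rw [hd] at h1
          have h2 : sP n r ≤ sP n r * (r - 2) := Nat.le_mul_of_pos_right _ hm
          omega
        · rw [if_neg hlow] at hd
          by_cases hmid : q < LP n r + sP n r
          · rw [if_pos hmid] at hd
            have h1 : (sP n r - (q - LP n r)) * (r - 2) ≤ sP n r * (r - 2) :=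
              Nat.mul_le_mul_right _ (Nat.sub_le _ _)
            omega
          · omega
      calc ((Finset.range n).filter (fun q => dP n r q = TP n r)).card
          ≤ (Finset.Ico (LP n r + sP n r) n).card := Finset.card_le_card hsub
        _ = n - (LP n r + sP n r) := Nat.card_Ico _ _
        _ ≤ r - 1 := by omega
    · -- generic case
      have hsub : (Finset.range n).filter (fun q => dP n r q = v) ⊆
          insert (LP n r + (sP n r - v / (r - 2)))
            (Finset.Ico ((sP n r - v) * (r - 2)) ((sP n r - v) * (r - 2) + (r - 2))) := by
        intro q hq
        rw [Finset.mem_filter, Finset.mem_range] at hq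
        obtain ⟨hqn, hd⟩ := hq
        rw [Finset.mem_insert, Finset.mem_Ico]
        rw [dP] at hd
        by_cases hlow : q < LP n r
        · rw [if_pos hlow] at hd
          right
          have hv1 : 1 ≤ v := by omega
          obtain ⟨a, ha⟩ : ∃ a, q / (r - 2) = a := ⟨_, rfl⟩
          rw [ha] at hd
          have hd1 : a = sP n r - v := by omega
          constructor
          · exact (Nat.le_div_iff_mul_le hm).1 (by rw [ha]; omega)
          · have h1 : q / (r - 2) < sP n r - v + 1 := by rw [ha]; omega
            have h2 := (Nat.div_lt_iff_lt_mul hm).1 h1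
            have h3 : (sP n r - v + 1) * (r - 2) = (sP n r - v) * (r - 2) + (r - 2) := by ring
            omega
        · rw [if_neg hlow] at hd
          by_cases hmid : q < LP n r + sP n r
          · rw [if_pos hmid] at hd
            left
            have hk : v / (r - 2) = sP n r - (q - LP n r) := by
              rw [← hd, Nat.mul_div_cancel _ hm]
            omega
          · rw [if_neg hmid] at hd
            exact absurd hd.symm hvT
      calc ((Finset.range n).filter (fun q => dP n r q = v)).card
          ≤ _ := Finset.card_le_card hsub
        _ ≤ (Finset.Ico ((sP n r - v) * (r - 2)) ((sP n r - v) * (r - 2) + (r - 2))).card + 1 :=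
            Finset.card_insert_le _ _
        _ ≤ r - 1 := by rw [Nat.card_Ico]; omega

end Numeric



/-! ### Counting edges with a fixed part set -/

lemma exists_unique_part {e : Finset (Fin n × Fin t)}
    (hpart : ∀ u ∈ e, ∀ v ∈ e, u ≠ v → u.1 ≠ v.1) {a : Fin n}
    (ha : a ∈ e.image Prod.fst) : ∃! u, u ∈ e ∧ u.1 = a := by
  rw [Finset.mem_image] at ha
  obtain ⟨u, hu, hua⟩ := ha
  refine ⟨u, ⟨hu, hua⟩, ?_⟩
  rintro w ⟨hw, hwa⟩
  by_contra hne
  exact hpart w hw u hu hne (by rw [hwa, hua])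

open Classical in
lemma card_fun_fix (S : Finset (Fin n)) (a0 : {x // x ∈ S}) (b : Fin t) :
    ((Finset.univ : Finset ({x // x ∈ S} → Fin t)).filter (fun g => g a0 = b)).card
      = t ^ (S.card - 1) := by
  classical
  have e1 : {g : {x // x ∈ S} → Fin t // g a0 = b} ≃ ({a : {x // x ∈ S} // ¬ a = a0} → Fin t) :=
    { toFun := fun g a => g.1 a.1
      invFun := fun h => ⟨fun a => if ha : a = a0 then b else h ⟨a, ha⟩, by simp⟩
      left_inv := by
        rintro ⟨g, hg⟩
        apply Subtype.ext
        funext a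
        by_cases ha : a = a0
        · subst ha; simpa using hg.symm
        · simp [ha]
      right_inv := by
        intro h
        funext a
        simp [a.2] }
  have h2 : Fintype.card {g : {x // x ∈ S} → Fin t // g a0 = b} = t ^ (S.card - 1) := by
    rw [Fintype.card_congr e1, Fintype.card_fun]
    congr 1
    · exact Fintype.card_fin t
    · rw [Fintype.card_subtype_compl, Fintype.card_subtype_eq, Fintype.card_coe]
  rw [← h2, Fintype.card_subtype]

open Classical in
lemma count_graphs (S : Finset (Fin n)) (hS : S.card = r) (v : Fin n × Fin t)
    (hv : v.1 ∈ S) :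
    ((completePartiteEdges n r t).filter (fun e => v ∈ e ∧ e.image Prod.fst = S)).card
      = t ^ (r - 1) := by
  classical
  have huniq : ∀ e ∈ (completePartiteEdges n r t).filter
      (fun e => v ∈ e ∧ e.image Prod.fst = S),
      ∀ a : {x // x ∈ S}, ∃! u, u ∈ e ∧ u.1 = a.1 := by
    intro e he a
    rw [Finset.mem_filter] at he
    exact exists_unique_part (mem_cpe.1 he.1).2 (by rw [he.2.2]; exact a.2)
  have hinj : ∀ g : {x // x ∈ S} → Fin t,
      Function.Injective (fun a : {x // x ∈ S} => (a.1, g a)) := by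
    intro g a b hab
    exact Subtype.ext (congrArg Prod.fst hab)
  have hcardPhi : ∀ g : {x // x ∈ S} → Fin t,
      (S.attach.image (fun a => (a.1, g a))).card = r := by
    intro g
    rw [Finset.card_image_of_injective _ (hinj g), Finset.card_attach, hS]
  have himgPhi : ∀ g : {x // x ∈ S} → Fin t,
      (S.attach.image (fun a => (a.1, g a))).image Prod.fst = S := by
    intro g
    rw [Finset.image_image]
    exact Finset.attach_image_val
  have hjmem : ∀ g : {x // x ∈ S} → Fin t, g ⟨v.1, hv⟩ = v.2 →
      S.attach.image (fun a => (a.1, g a)) ∈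
        (completePartiteEdges n r t).filter (fun e => v ∈ e ∧ e.image Prod.fst = S) := by
    intro g hg
    rw [Finset.mem_filter]
    refine ⟨mem_cpe.2 ⟨hcardPhi g, ?_⟩, ?_, himgPhi g⟩
    · intro u hu w hw hne
      rw [Finset.mem_image] at hu hw
      obtain ⟨a, _, rfl⟩ := hu
      obtain ⟨c, _, rfl⟩ := hw
      intro hfst
      exact hne (by rw [Subtype.ext hfst])
    · have h0 : ((⟨v.1, hv⟩ : {x // x ∈ S}).1, g ⟨v.1, hv⟩) ∈
          S.attach.image (fun a => (a.1, g a)) :=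
        Finset.mem_image_of_mem _ (Finset.mem_attach _ _)
      rw [hg] at h0
      exact h0
  have hfix := card_fun_fix S ⟨v.1, hv⟩ v.2
  rw [hS] at hfix
  rw [← hfix]
  refine Finset.card_bij'
    (fun e he => fun a => (Finset.choose (fun u => u.1 = a.1) e (huniq e he a)).2)
    (fun g _ => S.attach.image (fun a => (a.1, g a))) ?_ ?_ ?_ ?_
  · intro e he
    rw [Finset.mem_filter]
    refine ⟨Finset.mem_univ _, ?_⟩
    have hme := (Finset.mem_filter.1 he).2.1
    have h1 := Finset.choose_mem (fun u => u.1 = (⟨v.1, hv⟩ : {x // x ∈ S}).1) e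
      (huniq e he ⟨v.1, hv⟩)
    have h2 := Finset.choose_property (fun u => u.1 = (⟨v.1, hv⟩ : {x // x ∈ S}).1) e
      (huniq e he ⟨v.1, hv⟩)
    have h3 := (huniq e he ⟨v.1, hv⟩).unique ⟨h1, h2⟩ ⟨hme, rfl⟩
    exact congrArg Prod.snd h3
  · intro g hg
    rw [Finset.mem_filter] at hg
    exact hjmem g hg.2
  · intro e he
    have hsub : S.attach.image
        (fun a => (a.1, (Finset.choose (fun u => u.1 = a.1) e (huniq e he a)).2)) ⊆ e := by
      intro x hx
      rw [Finset.mem_image] at hx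
      obtain ⟨a, _, rfl⟩ := hx
      have h1 := Finset.choose_mem (fun u => u.1 = a.1) e (huniq e he a)
      have h2 := Finset.choose_property (fun u => u.1 = a.1) e (huniq e he a)
      have h3 : (a.1, (Finset.choose (fun u => u.1 = a.1) e (huniq e he a)).2)
          = Finset.choose (fun u => u.1 = a.1) e (huniq e he a) := by
        apply Prod.ext
        · exact h2.symm
        · rfl
      rwa [h3]
    refine Finset.eq_of_subset_of_card_le hsub ?_
    have he1 := (Finset.mem_filter.1 he).1
    rw [(mem_cpe.1 he1).1]
    rw [Finset.card_image_of_injective _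
      (show Function.Injective
        (fun a : {x // x ∈ S} =>
          (a.1, (Finset.choose (fun u => u.1 = a.1) e (huniq e he a)).2)) from
        fun a b hab => Subtype.ext (congrArg Prod.fst hab)),
      Finset.card_attach, hS]
  · intro g hg
    rw [Finset.mem_filter] at hg
    funext a
    have hmem := hjmem g hg.2
    have h1 := Finset.choose_mem (fun u => u.1 = a.1)
      (S.attach.image (fun b => (b.1, g b))) (huniq _ hmem a)
    have h2 := Finset.choose_property (fun u => u.1 = a.1)
      (S.attach.image (fun b => (b.1, g b))) (huniq _ hmem a)
    rw [Finset.mem_image] at h1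
    obtain ⟨b, _, hb⟩ := h1
    have hba : b = a := by
      apply Subtype.ext
      exact (congrArg Prod.fst hb).trans h2
    have hgoal : (Finset.choose (fun u => u.1 = a.1)
        (S.attach.image (fun b => (b.1, g b))) (huniq _ hmem a)).2 = g a := by
      rw [← hb, hba]
    exact hgoal



/-! ### The part-set family -/

def SFP (n r : ℕ) (j p0 : ℕ) : Finset (Fin n) :=
  Finset.univ.filter fun q : Fin n => q.val = p0 ∨ q.val = LP n r + j ∨ LP n r + sP n r ≤ q.val

lemma mem_SFP {q : Fin n} {j p0 : ℕ} :
    q ∈ SFP n r j p0 ↔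
      ((q : ℕ) = p0 ∨ (q : ℕ) = LP n r + j ∨ LP n r + sP n r ≤ (q : ℕ)) := by
  simp [SFP]

lemma card_filter_ge (c : ℕ) :
    ((Finset.univ : Finset (Fin n)).filter (fun q : Fin n => c ≤ q.val)).card = n - c := by
  rw [← Nat.card_Ico c n]
  refine Finset.card_nbij (fun q : Fin n => q.val) ?_ ?_ ?_
  · intro q hq
    rw [Finset.mem_coe, Finset.mem_filter] at hq
    rw [Finset.mem_coe, Finset.mem_Ico]
    exact ⟨hq.2, q.isLt⟩
  · exact Fin.val_injective.injOn
  · intro x hx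
    rw [Finset.coe_Ico, Set.mem_Ico] at hx
    exact ⟨⟨x, hx.2⟩, by simp [hx.1], rfl⟩

lemma card_filter_lt (c : ℕ) (hc : c ≤ n) :
    ((Finset.univ : Finset (Fin n)).filter (fun q : Fin n => q.val < c)).card = c := by
  have h := Nat.card_Ico 0 c
  rw [Nat.sub_zero] at h
  conv_rhs => rw [← h]
  refine Finset.card_nbij (fun q : Fin n => q.val) ?_ ?_ ?_
  · intro q hq
    rw [Finset.mem_coe, Finset.mem_filter] at hq
    rw [Finset.mem_coe, Finset.mem_Ico]
    exact ⟨Nat.zero_le _, hq.2⟩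
  · exact Fin.val_injective.injOn
  · intro x hx
    rw [Finset.coe_Ico, Set.mem_Ico] at hx
    exact ⟨⟨x, lt_of_lt_of_le hx.2 hc⟩, by simp [hx.2], rfl⟩

section SFPfacts

variable (hr : 3 ≤ r) (hn : 2 * (r - 1) ^ 2 < n)
include hr hn

lemma pair_bounds {jp : (_ : ℕ) × ℕ} (hjp : jp ∈ PairsP n r) :
    jp.2 < LP n r ∧ LP n r + jp.1 < LP n r + sP n r ∧ LP n r + sP n r + (r - 2) = n := by
  rw [mem_PairsP] at hjp
  have h1 : (sP n r - jp.1) * (r - 2) ≤ sP n r * (r - 2) :=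
    Nat.mul_le_mul_right _ (Nat.sub_le _ _)
  have h2 := sm_le_LP hr hn
  have h3 := size_eq hr hn
  exact ⟨by omega, by omega, by omega⟩

lemma card_SFP {jp : (_ : ℕ) × ℕ} (hjp : jp ∈ PairsP n r) :
    (SFP n r jp.1 jp.2).card = r := by
  obtain ⟨hb1, hb2, hb3⟩ := pair_bounds hr hn hjp
  have hp0n : jp.2 < n := by omega
  have hLjn : LP n r + jp.1 < n := by omega
  have hSF : SFP n r jp.1 jp.2 = insert ⟨jp.2, hp0n⟩ (insert ⟨LP n r + jp.1, hLjn⟩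
      ((Finset.univ : Finset (Fin n)).filter (fun q : Fin n => LP n r + sP n r ≤ q.val))) := by
    ext q
    rw [mem_SFP, Finset.mem_insert, Finset.mem_insert, Finset.mem_filter]
    constructor
    · rintro (h | h | h)
      · exact Or.inl (Fin.ext h)
      · exact Or.inr (Or.inl (Fin.ext h))
      · exact Or.inr (Or.inr ⟨Finset.mem_univ _, h⟩)
    · rintro (h | h | h)
      · exact Or.inl (by rw [h])
      · exact Or.inr (Or.inl (by rw [h]))
      · exact Or.inr (Or.inr h.2)
  rw [hSF]
  rw [Finset.card_insert_of_notMem, Finset.card_insert_of_notMem, card_filter_ge]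
  · omega
  · rw [Finset.mem_filter]
    push_neg
    intro _
    simp only []
    omega
  · rw [Finset.mem_insert, Finset.mem_filter]
    push_neg
    refine ⟨fun h => ?_, fun _ => ?_⟩
    · have := congrArg Fin.val h
      simp only [] at this
      omega
    · simp only []
      omega

lemma SFP_inj {jp jp' : (_ : ℕ) × ℕ} (hjp : jp ∈ PairsP n r) (hjp' : jp' ∈ PairsP n r)
    (h : SFP n r jp.1 jp.2 = SFP n r jp'.1 jp'.2) : jp = jp' := by
  obtain ⟨hb1, hb2, hb3⟩ := pair_bounds hr hn hjp
  obtain ⟨hc1, hc2, hc3⟩ := pair_bounds hr hn hjp'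
  have hp0n : jp.2 < n := by omega
  have hLjn : LP n r + jp.1 < n := by omega
  have h1 : (⟨jp.2, hp0n⟩ : Fin n) ∈ SFP n r jp'.1 jp'.2 := by
    rw [← h, mem_SFP]; exact Or.inl rfl
  have h2 : (⟨LP n r + jp.1, hLjn⟩ : Fin n) ∈ SFP n r jp'.1 jp'.2 := by
    rw [← h, mem_SFP]; exact Or.inr (Or.inl rfl)
  rw [mem_SFP] at h1 h2
  simp only [] at h1 h2
  have e2 : jp.2 = jp'.2 := by omega
  have e1 : jp.1 = jp'.1 := by omega
  cases jp with
  | mk j p =>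
    cases jp' with
    | mk j' p' =>
      simp only [] at e1 e2
      subst e1; subst e2; rfl

open Classical in
lemma count_main (v : Fin n × Fin t) :
    ((completePartiteEdges n r t).filter (fun e => v ∈ e ∧
        ∃ jp ∈ PairsP n r, e.image Prod.fst = SFP n r jp.1 jp.2)).card
      = dP n r (v.1 : ℕ) * t ^ (r - 1) := by
  classical
  have hU : (completePartiteEdges n r t).filter (fun e => v ∈ e ∧
        ∃ jp ∈ PairsP n r, e.image Prod.fst = SFP n r jp.1 jp.2)
      = ((PairsP n r).filter (fun jp => v.1 ∈ SFP n r jp.1 jp.2)).biUnion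
          (fun jp => (completePartiteEdges n r t).filter
            (fun e => v ∈ e ∧ e.image Prod.fst = SFP n r jp.1 jp.2)) := by
    ext e
    simp only [Finset.mem_filter, Finset.mem_biUnion]
    constructor
    · rintro ⟨he, hv, jp, hjp, himg⟩
      refine ⟨jp, ⟨hjp, ?_⟩, he, hv, himg⟩
      rw [← himg]
      exact Finset.mem_image_of_mem _ hv
    · rintro ⟨jp, hjpJ, he, hv, himg⟩
      exact ⟨he, hv, jp, hjpJ.1, himg⟩
  rw [hU, Finset.card_biUnion]
  · have hsum : ∀ jp ∈ (PairsP n r).filter (fun jp => v.1 ∈ SFP n r jp.1 jp.2),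
        ((completePartiteEdges n r t).filter
          (fun e => v ∈ e ∧ e.image Prod.fst = SFP n r jp.1 jp.2)).card = t ^ (r - 1) := by
      intro jp hjp
      rw [Finset.mem_filter] at hjp
      exact count_graphs _ (card_SFP hr hn hjp.1) v hjp.2
    rw [Finset.sum_congr rfl hsum, Finset.sum_const, smul_eq_mul]
    congr 1
    have hcond : ∀ jp ∈ PairsP n r, (v.1 ∈ SFP n r jp.1 jp.2 ↔
        ((v.1 : ℕ) = jp.2 ∨ (v.1 : ℕ) = LP n r + jp.1 ∨ LP n r + sP n r ≤ (v.1 : ℕ))) := by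
      intro jp _; exact mem_SFP
    rw [Finset.filter_congr hcond]
    exact pairs_card hr hn v.1.isLt
  · intro jp hjp jp' hjp' hne
    rw [Finset.mem_coe, Finset.mem_filter] at hjp hjp'
    rw [Function.onFun, Finset.disjoint_left]
    intro e he he'
    rw [Finset.mem_filter] at he he'
    exact hne (SFP_inj hr hn hjp.1 hjp'.1 (by rw [← he.2.2, he'.2.2]))

end SFPfacts



/-! ### The weighting and its sigma values -/

open Classical in
noncomputable def wEdge (n r t : ℕ) : Finset (Fin n × Fin t) → ℕ := fun e =>
  if ∃ jp ∈ PairsP n r, e.image Prod.fst = SFP n r jp.1 jp.2 then 2 else 1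

lemma wEdge_ge (e : Finset (Fin n × Fin t)) : 1 ≤ wEdge n r t e := by
  unfold wEdge; split <;> omega

lemma wEdge_le (e : Finset (Fin n × Fin t)) : wEdge n r t e ≤ 2 := by
  unfold wEdge; split <;> omega

open Classical in
lemma sigmaE_wEdge (v : Fin n × Fin t) :
    sigmaE (completePartiteEdges n r t) (wEdge n r t) v
      = ((completePartiteEdges n r t).filter (fun e => v ∈ e)).card
        + ((completePartiteEdges n r t).filter (fun e => v ∈ e ∧
            ∃ jp ∈ PairsP n r, e.image Prod.fst = SFP n r jp.1 jp.2)).card := by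
  rw [sigmaE, Finset.filter_congr_decidable]
  have hsplit : ∀ e ∈ (completePartiteEdges n r t).filter (fun e => v ∈ e),
      wEdge n r t e = 1 + (if ∃ jp ∈ PairsP n r,
        e.image Prod.fst = SFP n r jp.1 jp.2 then 1 else 0) := by
    intro e _
    unfold wEdge
    by_cases hP : ∃ jp ∈ PairsP n r, e.image Prod.fst = SFP n r jp.1 jp.2
    · rw [if_pos hP, if_pos hP]
    · rw [if_neg hP, if_neg hP]
  refine (Finset.sum_congr rfl hsplit).trans ?_
  rw [Finset.sum_add_distrib, Finset.sum_const, smul_eq_mul,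
    mul_one, Finset.sum_boole, Nat.cast_id, Finset.filter_filter]

lemma sigma_one (w : Finset (Fin n × Fin t) → ℕ)
    (hw : ∀ e ∈ completePartiteEdges n r t, w e = 1) (v : Fin n × Fin t) :
    sigmaE (completePartiteEdges n r t) w v
      = ((completePartiteEdges n r t).filter (fun e => v ∈ e)).card := by
  rw [sigmaE, Finset.filter_congr_decidable]
  refine (Finset.sum_congr rfl (fun e he => hw e (Finset.mem_of_mem_filter e he))).trans ?_
  exact (Finset.card_eq_sum_ones _).symm

lemma sigmaVE_split (wE : Finset (Fin n × Fin t) → ℕ) (v : Fin n × Fin t) :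
    sigmaVE (completePartiteEdges n r t) (fun _ => 1) wE v
      = 1 + sigmaE (completePartiteEdges n r t) wE v := rfl

lemma sum_nbhd_one (v : Fin n × Fin t) :
    ∑ u ∈ Finset.univ.filter (fun u => u ≠ v ∧
        ∃ e ∈ completePartiteEdges n r t, v ∈ e ∧ u ∈ e), (fun _ => (1 : ℕ)) u
      = (Finset.univ.filter (fun u => u ≠ v ∧
        ∃ e ∈ completePartiteEdges n r t, v ∈ e ∧ u ∈ e)).card := by
  exact (Finset.card_eq_sum_ones _).symm

section Main

variable (hr : 3 ≤ r) (hn : 2 * (r - 1) ^ 2 < n) (ht : 1 ≤ t)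
include hr hn

lemma edge_two_vals {e : Finset (Fin n × Fin t)} (he : e ∈ completePartiteEdges n r t) :
    ∃ u ∈ e, ∃ z ∈ e, dP n r (u.1 : ℕ) ≠ dP n r (z.1 : ℕ) := by
  by_contra hcon
  push_neg at hcon
  have hcard := (mem_cpe.1 he).1
  have hpart := (mem_cpe.1 he).2
  have hne : e.Nonempty := by rw [← Finset.card_pos, hcard]; omega
  obtain ⟨u0, hu0⟩ := hne
  have hsub : e.image (fun u => (u.1 : ℕ)) ⊆
      (Finset.range n).filter (fun q => dP n r q = dP n r (u0.1 : ℕ)) := by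
    intro q hq
    rw [Finset.mem_image] at hq
    obtain ⟨u, hu, rfl⟩ := hq
    rw [Finset.mem_filter, Finset.mem_range]
    exact ⟨u.1.isLt, hcon u hu u0 hu0⟩
  have hinj : Set.InjOn (fun u : Fin n × Fin t => (u.1 : ℕ)) e := by
    intro u hu z hz huz
    by_contra hne2
    exact hpart u hu z hz hne2 (Fin.val_injective huz)
  have hcard2 : (e.image (fun u => (u.1 : ℕ))).card = r := by
    rw [Finset.card_image_of_injOn hinj, hcard]
  have hle := Finset.card_le_card hsub
  rw [hcard2] at hle
  have hclass := class_card hr hn (dP n r (u0.1 : ℕ))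
  omega

include ht in
lemma upper_edge : ∀ e ∈ completePartiteEdges n r t, 2 ≤ e.card →
    ∃ u ∈ e, ∃ z ∈ e, sigmaE (completePartiteEdges n r t) (wEdge n r t) u ≠
      sigmaE (completePartiteEdges n r t) (wEdge n r t) z := by
  intro e he _
  obtain ⟨u, hu, z, hz, hd⟩ := edge_two_vals hr hn he
  refine ⟨u, hu, z, hz, ?_⟩
  rw [sigmaE_wEdge, sigmaE_wEdge, count_main hr hn u, count_main hr hn z, deg_const u z]
  intro hEq
  have h1 := Nat.add_left_cancel hEq
  have h2 := Nat.eq_of_mul_eq_mul_right (pow_pos (show 0 < t by omega) (r - 1)) h1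
  exact hd h2

include ht in
lemma exists_edge : ∃ e ∈ completePartiteEdges n r t, e.card = r := by
  have hrn : r ≤ n := r_le_n hr hn
  have hinj : Function.Injective (fun q : Fin n => (q, (⟨0, ht⟩ : Fin t))) := by
    intro a b hab
    exact congrArg Prod.fst hab
  have hc : ((Finset.univ.filter (fun q : Fin n => q.val < r)).image
      (fun q => (q, (⟨0, ht⟩ : Fin t)))).card = r := by
    rw [Finset.card_image_of_injective _ hinj, card_filter_lt r hrn]
  refine ⟨_, mem_cpe.2 ⟨hc, ?_⟩, hc⟩
  intro u hu w hw hne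
  rw [Finset.mem_image] at hu hw
  obtain ⟨a, _, rfl⟩ := hu
  obtain ⟨b, _, rfl⟩ := hw
  intro hfst
  exact hne (by rw [show a = b from hfst])

end Main



lemma sigmaVE_one (wV : Fin n × Fin t → ℕ) (wE : Finset (Fin n × Fin t) → ℕ)
    (hwV : ∀ v, wV v = 1) (hwE : ∀ e ∈ completePartiteEdges n r t, wE e = 1)
    (v : Fin n × Fin t) :
    sigmaVE (completePartiteEdges n r t) wV wE v
      = 1 + ((completePartiteEdges n r t).filter (fun e => v ∈ e)).card := by
  rw [sigmaVE, Finset.filter_congr_decidable, hwV v]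
  congr 1
  refine (Finset.sum_congr rfl (fun e he => hwE e (Finset.mem_of_mem_filter e he))).trans ?_
  exact (Finset.card_eq_sum_ones _).symm

lemma sigmaVEN_split (wV : Fin n × Fin t → ℕ) (wE : Finset (Fin n × Fin t) → ℕ)
    (hwV : ∀ v, wV v = 1) (v : Fin n × Fin t) :
    sigmaVEN (completePartiteEdges n r t) wV wE v
      = sigmaVE (completePartiteEdges n r t) wV wE v
        + (Finset.univ.filter (fun u => u ≠ v ∧
            ∃ e ∈ completePartiteEdges n r t, v ∈ e ∧ u ∈ e)).card := by
  rw [sigmaVEN, Finset.filter_congr_decidable]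
  congr 1
  refine (Finset.sum_congr rfl (fun u _ => hwV u)).trans ?_
  exact (Finset.card_eq_sum_ones _).symm

end ChiCPH

open ChiCPH in
/-- For `r ≥ 3`, `t ≥ 1` and `n > 2(r-1)²`,
`χ^e(K_n^r(t)) = χ^ve(K_n^r(t)) = χ^ven(K_n^r(t)) = 2`. -/
theorem chi_completePartiteHypergraph (n r t : ℕ) (hr : 3 ≤ r) (ht : 1 ≤ t)
    (hn : 2 * (r - 1) ^ 2 < n) :
    IsLeast {k : ℕ | 0 < k ∧ HasNSDEdgeWeighting (completePartiteEdges n r t) k} 2 ∧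
    IsLeast {k : ℕ | 0 < k ∧ HasNSDTotalWeightingVE (completePartiteEdges n r t) k} 2 ∧
    IsLeast {k : ℕ | 0 < k ∧ HasNFSDTotalWeighting (completePartiteEdges n r t) k} 2 := by
  obtain ⟨e0, he0, hc0⟩ := exists_edge hr hn ht
  have hc02 : 2 ≤ e0.card := by omega
  refine ⟨⟨⟨by norm_num, ?_⟩, ?_⟩, ⟨⟨by norm_num, ?_⟩, ?_⟩, ⟨⟨by norm_num, ?_⟩, ?_⟩⟩
  · -- χ^e ≤ 2
    exact ⟨wEdge n r t, fun e he => ⟨wEdge_ge e, wEdge_le e⟩, upper_edge hr hn ht⟩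
  · -- χ^e ≥ 2
    rintro k ⟨hk0, w, hwb, hprop⟩
    by_contra hlt
    push_neg at hlt
    have hone : ∀ e ∈ completePartiteEdges n r t, w e = 1 := by
      intro e he
      have := hwb e he
      omega
    obtain ⟨u, hu, z, hz, hne⟩ := hprop e0 he0 hc02
    exact hne (by rw [sigma_one w hone, sigma_one w hone]; exact deg_const u z)
  · -- χ^ve ≤ 2
    refine ⟨fun _ => 1, wEdge n r t, fun v => ⟨le_refl 1, one_le_two⟩,
      fun e he => ⟨wEdge_ge e, wEdge_le e⟩, ?_⟩
    intro e he hc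
    obtain ⟨u, hu, z, hz, hne⟩ := upper_edge hr hn ht e he hc
    refine ⟨u, hu, z, hz, ?_⟩
    rw [sigmaVE_split, sigmaVE_split]
    intro h
    exact hne (Nat.add_left_cancel h)
  · -- χ^ve ≥ 2
    rintro k ⟨hk0, wV, wE, hwV, hwE, hprop⟩
    by_contra hlt
    push_neg at hlt
    have honeV : ∀ v, wV v = 1 := by intro v; have := hwV v; omega
    have honeE : ∀ e ∈ completePartiteEdges n r t, wE e = 1 := by
      intro e he; have := hwE e he; omega
    obtain ⟨u, hu, z, hz, hne⟩ := hprop e0 he0 hc02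
    apply hne
    rw [sigmaVE_one wV wE honeV honeE, sigmaVE_one wV wE honeV honeE, deg_const u z]
  · -- χ^ven ≤ 2
    refine ⟨fun _ => 1, wEdge n r t, fun v => ⟨le_refl 1, one_le_two⟩,
      fun e he => ⟨wEdge_ge e, wEdge_le e⟩, ?_⟩
    intro e he hc
    obtain ⟨u, hu, z, hz, hne⟩ := upper_edge hr hn ht e he hc
    refine ⟨u, hu, z, hz, ?_⟩
    rw [sigmaVEN_split _ _ (fun _ => rfl) u, sigmaVEN_split _ _ (fun _ => rfl) z,
      sigmaVE_split, sigmaVE_split, nbhd_const u z]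
    intro h
    apply hne
    omega
  · -- χ^ven ≥ 2
    rintro k ⟨hk0, wV, wE, hwV, hwE, hprop⟩
    by_contra hlt
    push_neg at hlt
    have honeV : ∀ v, wV v = 1 := by intro v; have := hwV v; omega
    have honeE : ∀ e ∈ completePartiteEdges n r t, wE e = 1 := by
      intro e he; have := hwE e he; omega
    obtain ⟨u, hu, z, hz, hne⟩ := hprop e0 he0 hc02
    apply hne
    rw [sigmaVEN_split wV wE honeV u, sigmaVEN_split wV wE honeV z,
      sigmaVE_one wV wE honeV honeE, sigmaVE_one wV wE honeV honeE,
      deg_const u z, nbhd_const u z]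
end

section
/- Let r ≥ 3 and n ≥ r + 1. Then χ^e(K_n^r) = χ^ve(K_n^r) = χ^ven(K_n^r) = 2, where K_n^r is the complete r-uniform hypergraph on n vertices. -/
open Finset

/-- The edge set of the complete `r`-uniform hypergraph on `Fin n`:
all `r`-element subsets. -/
def completeEdges (n r : ℕ) : Finset (Finset (Fin n)) :=
  Finset.univ.powersetCard r

-- degree is constant
lemma deg_const (n r : ℕ) (u v : Fin n) :
    ((completeEdges n r).filter (fun e => u ∈ e)).card
      = ((completeEdges n r).filter (fun e => v ∈ e)).card := by
  classical
  apply Finset.card_nbij' (fun e => e.image (Equiv.swap u v))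
    (fun e => e.image (Equiv.swap u v))
  · intro e he
    simp only [mem_coe, mem_filter, completeEdges, mem_powersetCard] at he ⊢
    refine ⟨⟨subset_univ _, ?_⟩, ?_⟩
    · rw [Finset.card_image_of_injective _ (Equiv.injective _)]; exact he.1.2
    · exact Finset.mem_image.2 ⟨u, he.2, Equiv.swap_apply_left u v⟩
  · intro e he
    simp only [mem_coe, mem_filter, completeEdges, mem_powersetCard] at he ⊢
    refine ⟨⟨subset_univ _, ?_⟩, ?_⟩
    · rw [Finset.card_image_of_injective _ (Equiv.injective _)]; exact he.1.2
    · exact Finset.mem_image.2 ⟨v, he.2, Equiv.swap_apply_right u v⟩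
  · intro e he; dsimp only; rw [Finset.image_image]; ext x; simp [Equiv.swap_apply_self]
  · intro e he; dsimp only; rw [Finset.image_image]; ext x; simp [Equiv.swap_apply_self]

-- common edge for any two vertices
lemma neighbor (n r : ℕ) (hr2 : 2 ≤ r) (hrn : r ≤ n) (u v : Fin n) (huv : u ≠ v) :
    ∃ e ∈ completeEdges n r, v ∈ e ∧ u ∈ e := by
  classical
  obtain ⟨t, hsub, hcard⟩ := Finset.exists_superset_card_eq (s := ({u, v} : Finset (Fin n)))
    (n := r) (by rw [Finset.card_pair huv]; exact hr2) (by simpa using hrn)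
  exact ⟨t, by simp [completeEdges, Finset.mem_powersetCard, hcard],
    hsub (by simp), hsub (by simp)⟩

-- edge existence
lemma edge_exists (n r : ℕ) (hrn : r ≤ n) : ∃ e ∈ completeEdges n r, e.card = r := by
  classical
  obtain ⟨t, _, hcard⟩ := Finset.exists_superset_card_eq (s := (∅ : Finset (Fin n)))
    (n := r) (by simp) (by simpa using hrn)
  exact ⟨t, by simp [completeEdges, Finset.mem_powersetCard, hcard], hcard⟩

def bigSet (n m : ℕ) : Finset (Fin n) := univ.filter (fun x => m ≤ x.val)

def goodEdge (n m : ℕ) (e : Finset (Fin n)) : Prop :=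
  bigSet n m ⊆ e ∧ m - 1 ≤ ∑ x ∈ e.filter (fun x => x.val < m), x.val

instance (n m : ℕ) : DecidablePred (goodEdge n m) := fun e => by
  unfold goodEdge; infer_instance

lemma card_bigSet (n m : ℕ) : (bigSet n m).card = n - m := by
  classical
  have : (bigSet n m).card = (Ico m n).card := by
    apply Finset.card_bij (fun (x : Fin n) _ => x.val)
    · intro a ha
      simp only [bigSet, mem_filter, mem_univ, true_and] at ha
      simp [mem_Ico, ha, a.isLt]
    · intro a _ b _ h; exact Fin.val_injective h
    · intro b hb
      simp only [mem_Ico] at hb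
      exact ⟨⟨b, hb.2⟩, by simp [bigSet, hb.1], rfl⟩
  rw [this, Nat.card_Ico]

lemma count_aux (m v : ℕ) (hv : v < m) :
    ((range m).filter (fun u => u ≠ v ∧ m - 1 ≤ u + v)).card
      = if m - 1 ≤ 2 * v then v else v + 1 := by
  split_ifs with h
  · have he : (range m).filter (fun u => u ≠ v ∧ m - 1 ≤ u + v)
        = (Ico (m - 1 - v) m).erase v := by
      ext u
      simp only [mem_filter, mem_range, mem_Ico, mem_erase]
      omega
    rw [he, Finset.card_erase_of_mem (by simp only [mem_Ico]; omega), Nat.card_Ico]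
    omega
  · have he : (range m).filter (fun u => u ≠ v ∧ m - 1 ≤ u + v)
        = Ico (m - 1 - v) m := by
      ext u
      simp only [mem_filter, mem_range, mem_Ico]
      omega
    rw [he, Nat.card_Ico]
    omega

lemma deg_small (n r : ℕ) (hr : 3 ≤ r) (hn : r + 1 ≤ n) (v : Fin n)
    (hv : v.val < n - r + 2) :
    ((completeEdges n r).filter (fun e => v ∈ e ∧ goodEdge n (n - r + 2) e)).card
      = if (n - r + 2) - 1 ≤ 2 * v.val then v.val else v.val + 1 := by
  classical
  set m := n - r + 2 with hmdef
  have hm3 : 3 ≤ m := by omega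
  have hmn : m ≤ n := by omega
  have hC : (bigSet n m).card = r - 2 := by rw [card_bigSet]; omega
  have hvC : v ∉ bigSet n m := by simp only [bigSet, mem_filter, mem_univ, true_and]; omega
  rw [← count_aux m v.val hv]
  symm
  apply Finset.card_bij (fun (u : ℕ) (hu : u ∈ (range m).filter
      (fun u => u ≠ v.val ∧ m - 1 ≤ u + v.val)) =>
    insert (⟨u, lt_of_lt_of_le (mem_range.1 (mem_filter.1 hu).1) hmn⟩ : Fin n)
      (insert v (bigSet n m)))
  · intro u hu
    have hu' := mem_filter.1 hu
    have hur : u < m := mem_range.1 hu'.1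
    have hu2 : u ≠ v.val := hu'.2.1
    have hu3 : m - 1 ≤ u + v.val := hu'.2.2
    set uf : Fin n := ⟨u, lt_of_lt_of_le (mem_range.1 (mem_filter.1 hu).1) hmn⟩ with hufdef
    have hune : uf ≠ v := by
      intro h; exact hu2 (by rw [← h])
    have hunotC : uf ∉ bigSet n m := by
      simp only [bigSet, mem_filter, mem_univ, true_and, hufdef, Fin.val_mk]; omega
    have hcard : (insert uf (insert v (bigSet n m))).card = r := by
      rw [Finset.card_insert_of_notMem (by
          simp only [mem_insert]
          push_neg
          exact ⟨hune, hunotC⟩),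
        Finset.card_insert_of_notMem hvC, hC]
      omega
    have hfilter : (insert uf (insert v (bigSet n m))).filter (fun x => x.val < m)
        = {uf, v} := by
      ext x
      simp only [mem_filter, mem_insert, mem_singleton, bigSet, mem_univ, true_and]
      constructor
      · rintro ⟨(rfl | rfl | hx), hlt⟩
        · exact Or.inl rfl
        · exact Or.inr rfl
        · exact absurd hlt (by omega)
      · rintro (rfl | rfl)
        · exact ⟨Or.inl rfl, hur⟩
        · exact ⟨Or.inr (Or.inl rfl), hv⟩
    simp only [mem_filter]
    refine ⟨?_, ?_, ?_, ?_⟩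
    · simp only [completeEdges, mem_powersetCard]
      exact ⟨subset_univ _, hcard⟩
    · exact mem_insert_of_mem (mem_insert_self _ _)
    · exact (Finset.subset_insert _ _).trans (Finset.subset_insert _ _)
    · rw [hfilter, Finset.sum_pair hune]
      exact hu3
  · intro u1 hu1 u2 hu2 h
    have h1 := mem_filter.1 hu1
    have h2 := mem_filter.1 hu2
    have : (⟨u1, lt_of_lt_of_le (mem_range.1 h1.1) hmn⟩ : Fin n) ∈
        insert (⟨u2, lt_of_lt_of_le (mem_range.1 (mem_filter.1 hu2).1) hmn⟩ : Fin n)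
          (insert v (bigSet n m)) := by
      rw [← h]; exact mem_insert_self _ _
    rcases mem_insert.1 this with h' | h'
    · exact congrArg Fin.val h'
    · rcases mem_insert.1 h' with h'' | h''
      · exact absurd (congrArg Fin.val h'') h1.2.1
      · simp only [bigSet, mem_filter, mem_univ, true_and] at h''
        exact absurd h'' (by simpa using Nat.not_le.2 (mem_range.1 h1.1))
  · intro e he
    simp only [mem_filter, completeEdges, mem_powersetCard] at he
    obtain ⟨⟨_, hecard⟩, hve, hCe, hsum⟩ := he
    have hfe : e.filter (fun x => ¬ x.val < m) = bigSet n m := by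
      ext x
      simp only [mem_filter, bigSet, mem_univ, true_and, not_lt]
      constructor
      · exact fun h => h.2
      · intro h
        exact ⟨hCe (by simp only [bigSet, mem_filter, mem_univ, true_and]; exact h), h⟩
    have hScard : (e.filter (fun x => x.val < m)).card = 2 := by
      have h := Finset.card_filter_add_card_filter_not (s := e)
        (p := fun x => x.val < m)
      rw [hfe, hC, hecard] at h
      omega
    obtain ⟨a, b, hab, hSeq⟩ := Finset.card_eq_two.1 hScard
    have hvS : v ∈ e.filter (fun x => x.val < m) := mem_filter.2 ⟨hve, hv⟩
    rw [hSeq] at hvS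
    obtain ⟨c, hc_ne, hSeq'⟩ : ∃ c : Fin n, c ≠ v ∧
        e.filter (fun x => x.val < m) = {v, c} := by
      rcases mem_insert.1 hvS with h' | h'
      · refine ⟨b, ?_, ?_⟩
        · rw [h']; exact fun h => hab h.symm
        · rw [hSeq, h']
      · have h'' := mem_singleton.1 h'
        refine ⟨a, ?_, ?_⟩
        · rw [h'']; exact hab
        · rw [hSeq, h'', Finset.pair_comm]
    have hcS : c ∈ e.filter (fun x => x.val < m) := by rw [hSeq']; simp
    have hcm : c.val < m := (mem_filter.1 hcS).2
    have hce : c ∈ e := (mem_filter.1 hcS).1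
    have hcv : c.val ≠ v.val := fun h => hc_ne (Fin.val_injective h)
    have hvc : v ≠ c := fun h => hc_ne h.symm
    have hsum2 : m - 1 ≤ c.val + v.val := by
      rw [hSeq', Finset.sum_pair hvc] at hsum
      omega
    have hmem : c.val ∈ (range m).filter
        (fun u => u ≠ v.val ∧ m - 1 ≤ u + v.val) :=
      mem_filter.2 ⟨mem_range.2 hcm, hcv, hsum2⟩
    refine ⟨c.val, hmem, ?_⟩
    have hfc : (⟨c.val, lt_of_lt_of_le (mem_range.1 (mem_filter.1 hmem).1) hmn⟩ : Fin n)
        = c := by ext; rfl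
    rw [hfc]
    apply Finset.Subset.antisymm
    · exact Finset.insert_subset hce (Finset.insert_subset hve hCe)
    · intro x hx
      by_cases hxm : x.val < m
      · have hxS : x ∈ e.filter (fun y => y.val < m) := mem_filter.2 ⟨hx, hxm⟩
        rw [hSeq'] at hxS
        rcases mem_insert.1 hxS with h' | h'
        · rw [h']; exact mem_insert_of_mem (mem_insert_self _ _)
        · rw [mem_singleton.1 h']; exact mem_insert_self _ _
      · refine mem_insert_of_mem (mem_insert_of_mem ?_)
        simp only [bigSet, mem_filter, mem_univ, true_and]
        omega

lemma deg_big (n r : ℕ) (v : Fin n) (hv : n - r + 2 ≤ v.val) :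
    ((completeEdges n r).filter (fun e => v ∈ e ∧ goodEdge n (n - r + 2) e)).card
      = ((completeEdges n r).filter (goodEdge n (n - r + 2))).card := by
  congr 1
  apply Finset.filter_congr
  intro e _
  exact ⟨fun h => h.2, fun h =>
    ⟨h.1 (by simp only [bigSet, mem_filter, mem_univ, true_and]; exact hv), h⟩⟩

lemma T_ge (n r : ℕ) (hr : 3 ≤ r) (hn : r + 1 ≤ n) :
    (n - r + 2) - 1 ≤ ((completeEdges n r).filter (goodEdge n (n - r + 2))).card := by
  have hvlt : (n - r + 2) - 1 < n := by omega
  set v : Fin n := ⟨(n - r + 2) - 1, hvlt⟩ with hvdef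
  have hvval : v.val = (n - r + 2) - 1 := rfl
  have h1 := deg_small n r hr hn v (by rw [hvval]; omega)
  rw [hvval, if_pos (by omega)] at h1
  have h2 : ((completeEdges n r).filter (fun e => v ∈ e ∧ goodEdge n (n - r + 2) e))
      ⊆ ((completeEdges n r).filter (goodEdge n (n - r + 2))) := by
    intro e he
    have h := mem_filter.1 he
    exact mem_filter.2 ⟨h.1, h.2.2⟩
  exact le_trans (le_of_eq h1.symm) (Finset.card_le_card h2)

lemma sigma_formula (n r : ℕ) (v : Fin n) :
    sigmaE (completeEdges n r) (fun e => if goodEdge n (n - r + 2) e then 2 else 1) v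
      = ((completeEdges n r).filter (fun e => v ∈ e)).card
        + ((completeEdges n r).filter (fun e => v ∈ e ∧ goodEdge n (n - r + 2) e)).card := by
  classical
  rw [sigmaE, Finset.filter_congr_decidable]
  trans ∑ e ∈ (completeEdges n r).filter (fun e => v ∈ e),
      (1 + if goodEdge n (n - r + 2) e then 1 else 0)
  · exact Finset.sum_congr rfl (fun e _ => by
      by_cases hg : goodEdge n (n - r + 2) e <;> simp [hg])
  rw [Finset.sum_add_distrib, Finset.sum_const, smul_eq_mul,
    mul_one, Finset.sum_boole, Nat.cast_id, Finset.filter_filter]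

lemma filter_ext {α : Type*} {p : α → Prop} (h1 h2 : DecidablePred p) (s : Finset α) :
    @Finset.filter α p h1 s = @Finset.filter α p h2 s := by
  congr 1

lemma core (n r : ℕ) (hr : 3 ≤ r) (hn : r + 1 ≤ n) :
    ∃ w : Finset (Fin n) → ℕ, (∀ e, 1 ≤ w e ∧ w e ≤ 2) ∧
      ∀ e ∈ completeEdges n r, ∃ u ∈ e, ∃ v ∈ e,
        sigmaE (completeEdges n r) w u ≠ sigmaE (completeEdges n r) w v := by
  classical
  refine ⟨fun e => if goodEdge n (n - r + 2) e then 2 else 1,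
    fun e => by beta_reduce; split_ifs <;> omega, ?_⟩
  intro e he
  have hm3 : 3 ≤ n - r + 2 := by omega
  set dF : Fin n → ℕ := fun v =>
    ((completeEdges n r).filter (fun e' => v ∈ e' ∧ goodEdge n (n - r + 2) e')).card
    with hdF
  suffices h : ∃ u ∈ e, ∃ v ∈ e, dF u ≠ dF v by
    obtain ⟨u, hu, v, hv, hne⟩ := h
    refine ⟨u, hu, v, hv, fun hEq => hne ?_⟩
    rw [sigma_formula, sigma_formula] at hEq
    have hd := deg_const n r u v
    simp only [hdF]
    omega
  by_contra hcon
  push_neg at hcon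
  have hecard : e.card = r := by
    have := he
    simp only [completeEdges, mem_powersetCard] at this
    exact this.2
  have hCcard : (bigSet n (n - r + 2)).card = r - 2 := by rw [card_bigSet]; omega
  have hbigs : e.filter (fun x => ¬ x.val < n - r + 2) ⊆ bigSet n (n - r + 2) := by
    intro x hx
    have h := mem_filter.1 hx
    simp only [bigSet, mem_filter, mem_univ, true_and]
    omega
  have hbcard : (e.filter (fun x => ¬ x.val < n - r + 2)).card ≤ r - 2 :=
    le_trans (Finset.card_le_card hbigs) (le_of_eq hCcard)
  have hsplit := Finset.card_filter_add_card_filter_not (s := e)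
    (p := fun x => x.val < n - r + 2)
  have hscard : 2 ≤ (e.filter (fun x => x.val < n - r + 2)).card := by omega
  have hT := T_ge n r hr hn
  rcases Nat.lt_or_ge (e.filter (fun x => x.val < n - r + 2)).card 3 with hlt | hge3
  · -- exactly two small vertices, and a big one
    have h2 : (e.filter (fun x => x.val < n - r + 2)).card = 2 := by omega
    obtain ⟨a, b, hab, hSeq⟩ := Finset.card_eq_two.1 h2
    have hbigne : (e.filter (fun x => ¬ x.val < n - r + 2)).Nonempty := by
      rw [← Finset.card_pos]; omega
    obtain ⟨g, hg⟩ := hbigne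
    have hge' : g ∈ e := (mem_filter.1 hg).1
    have hgm : n - r + 2 ≤ g.val := by
      have := (mem_filter.1 hg).2; omega
    have haS : a ∈ e.filter (fun x => x.val < n - r + 2) := by rw [hSeq]; simp
    have hbS : b ∈ e.filter (fun x => x.val < n - r + 2) := by rw [hSeq]; simp
    have ha := mem_filter.1 haS
    have hb := mem_filter.1 hbS
    have e1 : dF a = dF b := hcon a ha.1 b hb.1
    have e2 : dF a = dF g := hcon a ha.1 g hge'
    have hvab : a.val ≠ b.val := fun h => hab (Fin.val_injective h)
    simp only [hdF] at e1 e2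
    rw [deg_small n r hr hn a ha.2, deg_small n r hr hn b hb.2] at e1
    rw [deg_small n r hr hn a ha.2, deg_big n r g hgm] at e2
    have hpa := ha.2
    have hpb := hb.2
    split_ifs at e1 e2 <;> omega
  · -- at least three small vertices
    obtain ⟨a, ha', b, hb', c, hc', hab, hac, hbc⟩ := Finset.two_lt_card.1 hge3
    have ha := mem_filter.1 ha'
    have hb := mem_filter.1 hb'
    have hc := mem_filter.1 hc'
    have e1 : dF a = dF b := hcon a ha.1 b hb.1
    have e2 : dF a = dF c := hcon a ha.1 c hc.1
    have hvab : a.val ≠ b.val := fun h => hab (Fin.val_injective h)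
    have hvac : a.val ≠ c.val := fun h => hac (Fin.val_injective h)
    have hvbc : b.val ≠ c.val := fun h => hbc (Fin.val_injective h)
    simp only [hdF] at e1 e2
    rw [deg_small n r hr hn a ha.2, deg_small n r hr hn b hb.2] at e1
    rw [deg_small n r hr hn a ha.2, deg_small n r hr hn c hc.2] at e2
    split_ifs at e1 e2 <;> omega

/-- For `r ≥ 3` and `n ≥ r + 1`,
`χ^e(K_n^r) = χ^ve(K_n^r) = χ^ven(K_n^r) = 2`. -/
theorem chi_completeHypergraph (n r : ℕ) (hr : 3 ≤ r) (hn : r + 1 ≤ n) :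
    IsLeast {k : ℕ | 0 < k ∧ HasNSDEdgeWeighting (completeEdges n r) k} 2 ∧
    IsLeast {k : ℕ | 0 < k ∧ HasNSDTotalWeightingVE (completeEdges n r) k} 2 ∧
    IsLeast {k : ℕ | 0 < k ∧ HasNFSDTotalWeighting (completeEdges n r) k} 2 := by
  classical
  have hr2 : 2 ≤ r := by omega
  have hrn : r ≤ n := by omega
  obtain ⟨w, hwb, hwp⟩ := core n r hr hn
  -- neighborhood sum is n - 1 for unit vertex weights
  have hnb : ∀ (v : Fin n) (wV : Fin n → ℕ), (∀ x, wV x = 1) →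
      ∀ (inst : DecidablePred (fun u : Fin n => u ≠ v ∧ ∃ e ∈ completeEdges n r, v ∈ e ∧ u ∈ e)),
      ∑ u ∈ @Finset.filter _
        (fun u => u ≠ v ∧ ∃ e ∈ completeEdges n r, v ∈ e ∧ u ∈ e) inst Finset.univ, wV u = n - 1 := by
    intro v wV hwV inst
    have hset : @Finset.filter _
        (fun u => u ≠ v ∧ ∃ e ∈ completeEdges n r, v ∈ e ∧ u ∈ e) inst Finset.univ
          = Finset.univ.erase v := by
      ext u
      simp only [mem_filter, mem_univ, true_and, mem_erase, and_true]
      exact ⟨fun h => h.1, fun h => ⟨h, neighbor n r hr2 hrn u v h⟩⟩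
    rw [hset, Finset.sum_congr rfl (fun x _ => hwV x), Finset.sum_const, smul_eq_mul,
      mul_one, Finset.card_erase_of_mem (mem_univ v), Finset.card_univ, Fintype.card_fin]
  -- sigmaVE with unit vertex weights
  have hVE : ∀ (v : Fin n) (wV : Fin n → ℕ) (wE : Finset (Fin n) → ℕ), (∀ x, wV x = 1) →
      sigmaVE (completeEdges n r) wV wE v = 1 + sigmaE (completeEdges n r) wE v := by
    intro v wV wE hwV
    rw [sigmaVE, hwV v, sigmaE]
  -- sigmaVEN with unit vertex weights
  have hVEN : ∀ (v : Fin n) (wV : Fin n → ℕ) (wE : Finset (Fin n) → ℕ), (∀ x, wV x = 1) →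
      sigmaVEN (completeEdges n r) wV wE v
        = (1 + sigmaE (completeEdges n r) wE v) + (n - 1) := by
    intro v wV wE hwV
    rw [sigmaVEN, hVE v wV wE hwV]
    congr 1
    exact hnb v wV hwV _
  -- sigmaE is constant for unit edge weights
  have hconst : ∀ (w' : Finset (Fin n) → ℕ), (∀ e ∈ completeEdges n r, w' e = 1) →
      ∀ u v : Fin n,
        sigmaE (completeEdges n r) w' u = sigmaE (completeEdges n r) w' v := by
    intro w' hw' u v
    have h1 : ∀ (x : Fin n) (inst : DecidablePred (fun e : Finset (Fin n) => x ∈ e)),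
        (∑ e ∈ @Finset.filter _ (fun e => x ∈ e) inst (completeEdges n r), w' e)
          = (@Finset.filter _ (fun e => x ∈ e) inst (completeEdges n r)).card := by
      intro x inst
      rw [Finset.sum_congr rfl (fun e he => hw' e (mem_filter.1 he).1),
        Finset.sum_const, smul_eq_mul, mul_one]
    rw [sigmaE, sigmaE, h1 u, h1 v]
    exact Eq.trans (congrArg Finset.card (filter_ext _ _ _))
      (Eq.trans (deg_const n r u v) (congrArg Finset.card (filter_ext _ _ _)))
  obtain ⟨e₀, he₀, hcard₀⟩ := edge_exists n r hrn
  refine ⟨⟨⟨by norm_num, ?_⟩, ?_⟩, ⟨⟨by norm_num, ?_⟩, ?_⟩, ⟨⟨by norm_num, ?_⟩, ?_⟩⟩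
  · -- membership, edge weighting
    exact ⟨w, fun e _ => hwb e, fun e he _ => hwp e he⟩
  · -- lower bound, edge weighting
    rintro k ⟨hpos, hW⟩
    by_contra hlt
    have hk1 : k = 1 := by omega
    subst hk1
    obtain ⟨w', hb', hp'⟩ := hW
    obtain ⟨u, hu, v, hv, hne⟩ := hp' e₀ he₀ (by omega)
    exact hne (hconst w' (fun e he => le_antisymm (hb' e he).2 (hb' e he).1) u v)
  · -- membership, total VE weighting
    refine ⟨fun _ => 1, w, fun v => by norm_num, fun e _ => hwb e, fun e he _ => ?_⟩
    obtain ⟨u, hu, v, hv, hne⟩ := hwp e he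
    refine ⟨u, hu, v, hv, fun h => hne ?_⟩
    rw [hVE u _ w (fun _ => rfl), hVE v _ w (fun _ => rfl)] at h
    omega
  · -- lower bound, total VE weighting
    rintro k ⟨hpos, hW⟩
    by_contra hlt
    have hk1 : k = 1 := by omega
    subst hk1
    obtain ⟨wV, wE, hbV, hbE, hp'⟩ := hW
    have hwV1 : ∀ x, wV x = 1 := fun x => le_antisymm (hbV x).2 (hbV x).1
    obtain ⟨u, hu, v, hv, hne⟩ := hp' e₀ he₀ (by omega)
    apply hne
    rw [hVE u wV wE hwV1, hVE v wV wE hwV1,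
      hconst wE (fun e he => le_antisymm (hbE e he).2 (hbE e he).1) u v]
  · -- membership, total VEN weighting
    refine ⟨fun _ => 1, w, fun v => by norm_num, fun e _ => hwb e, fun e he _ => ?_⟩
    obtain ⟨u, hu, v, hv, hne⟩ := hwp e he
    refine ⟨u, hu, v, hv, fun h => hne ?_⟩
    rw [hVEN u _ w (fun _ => rfl), hVEN v _ w (fun _ => rfl)] at h
    omega
  · -- lower bound, total VEN weighting
    rintro k ⟨hpos, hW⟩
    by_contra hlt
    have hk1 : k = 1 := by omega
    subst hk1
    obtain ⟨wV, wE, hbV, hbE, hp'⟩ := hW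
    have hwV1 : ∀ x, wV x = 1 := fun x => le_antisymm (hbV x).2 (hbV x).1
    obtain ⟨u, hu, v, hv, hne⟩ := hp' e₀ he₀ (by omega)
    apply hne
    rw [hVEN u wV wE hwV1, hVEN v wV wE hwV1,
      hconst wE (fun e he => le_antisymm (hbE e he).2 (hbE e he).1) u v]
end
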